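/- (Lemma 3.2 (ii).) Suppose that for every K > 0 the function x ↦ inf_{s∈[0,K]} h(x,s) is nonnegative on D and not identically zero. Then for every a > λ₁ there exists M > 0 such that for all c > M the equation Ψ(−Δ)u = au − f(x,u) − c h(x,u) in D, u = 0 in D^c, has no nonzero nonnegative bounded continuous viscosity solution. -/

import Mathlib

open MeasureTheory Real Set Metric Filter Bornology

noncomputable section

/-- Euclidean space ℝ^d. -/
abbrev Rd (d : ℕ) : Type := EuclideanSpace ℝ (Fin d)

/-- Gaussian heat kernel (of Brownian motion running twice as fast). -/
def heatKer (d : ℕ) (t r : ℝ) : ℝ := (4 * π * t) ^ (-(d : ℝ) / 2) * Real.exp (-(r ^ 2 / (4 * t)))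

/-- The radial Lévy density of the subordinate Brownian motion. -/
def levyDensity (d : ℕ) (m : Measure ℝ) (r : ℝ) : ℝ :=
  ∫ t in Ioi (0 : ℝ), heatKer d t r ∂m

/-- The Bernstein function (Laplace exponent) associated with the Lévy measure `m`. -/
def bernsteinOf (m : Measure ℝ) (s : ℝ) : ℝ :=
  ∫ t in Ioi (0 : ℝ), (1 - Real.exp (-(s * t))) ∂m

/-- The nonlocal operator `Ψ(−Δ)` with radial jump kernel `J`. -/
def psiDel (d : ℕ) (J : ℝ → ℝ) (g : Rd d → ℝ) (x : Rd d) : ℝ :=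
  -(1 / 2) * ∫ y : Rd d, (g (x + y) + g (x - y) - 2 * g x) * J ‖y‖

/-- Boundedness of a real-valued function. -/
def Bdd {α : Type*} (g : α → ℝ) : Prop := ∃ C, ∀ x, |g x| ≤ C

/-- `ξ` is `C²` in a neighbourhood of `x`. -/
def C2Near (d : ℕ) (ξ : Rd d → ℝ) (x : Rd d) : Prop :=
  ∃ ε > 0, ContDiffOn ℝ 2 ξ (Metric.ball x ε)

/-- Viscosity subsolution of `Ψ(−Δ)u = g` in `D`. -/
def IsViscSubsol (d : ℕ) (J : ℝ → ℝ) (D : Set (Rd d)) (g : Rd d → ℝ) (u : Rd d → ℝ) : Prop :=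
  ∀ x ∈ D, ∀ ξ : Rd d → ℝ, Bdd ξ → Continuous ξ → C2Near d ξ x →
    ξ x = u x → (∀ y, y ≠ x → u y < ξ y) → psiDel d J ξ x ≤ g x

/-- Viscosity supersolution of `Ψ(−Δ)u = g` in `D`. -/
def IsViscSupersol (d : ℕ) (J : ℝ → ℝ) (D : Set (Rd d)) (g : Rd d → ℝ) (u : Rd d → ℝ) : Prop :=
  ∀ x ∈ D, ∀ ξ : Rd d → ℝ, Bdd ξ → Continuous ξ → C2Near d ξ x →
    ξ x = u x → (∀ y, y ≠ x → ξ y < u y) → g x ≤ psiDel d J ξ x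

/-- Viscosity solution of `Ψ(−Δ)u = g` in `D`. -/
def IsViscSol (d : ℕ) (J : ℝ → ℝ) (D : Set (Rd d)) (g u : Rd d → ℝ) : Prop :=
  IsViscSubsol d J D g u ∧ IsViscSupersol d J D g u

/-- The generalized (Berestycki–Nirenberg–Varadhan type) principal eigenvalue of
`−Ψ(−Δ) + c` in `D`. -/
def principalEV (d : ℕ) (J : ℝ → ℝ) (D : Set (Rd d)) (c : Rd d → ℝ) : ℝ :=
  sSup {l : ℝ | ∃ ψ : Rd d → ℝ, Bdd ψ ∧ Continuous ψ ∧ (∀ x, 0 ≤ ψ x) ∧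
    (∀ x ∈ D, 0 < ψ x) ∧ IsViscSupersol d J D (fun x => (c x + l) * ψ x) ψ}

/-- The Dirichlet principal eigenvalue `λ₁`. -/
def lambda1 (d : ℕ) (J : ℝ → ℝ) (D : Set (Rd d)) : ℝ :=
  principalEV d J D (fun _ => 0)

/-- Uniform interior and exterior ball condition (C^{1,1} boundary). -/
def UniformBallCondition (d : ℕ) (D : Set (Rd d)) : Prop :=
  ∃ r > 0, ∀ x ∈ frontier D,
    (∃ z : Rd d, dist x z = r ∧ Metric.ball z r ⊆ D) ∧
    (∃ z : Rd d, dist x z = r ∧ Metric.ball z r ⊆ (closure D)ᶜ)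

/-- A (positive) solution of the logistic equation `Ψ(−Δ)u = au − f(x,u)` in `D`,
vanishing outside `D`. -/
def IsLogisticSol (d : ℕ) (J : ℝ → ℝ) (D : Set (Rd d)) (f : Rd d → ℝ → ℝ) (a : ℝ)
    (u : Rd d → ℝ) : Prop :=
  Bdd u ∧ Continuous u ∧
    IsViscSol d J D (fun x => a * u x - f x (u x)) u ∧
    (∀ x ∈ D, 0 < u x) ∧ (∀ x ∈ Dᶜ, u x = 0)

/-- A (positive) solution of the harvesting problem
`Ψ(−Δ)u = au − f(x,u) − c h(x,u)` in `D`, vanishing outside `D`. -/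
def IsHarvestSol (d : ℕ) (J : ℝ → ℝ) (D : Set (Rd d)) (f h : Rd d → ℝ → ℝ) (a c : ℝ)
    (u : Rd d → ℝ) : Prop :=
  Bdd u ∧ Continuous u ∧
    IsViscSol d J D (fun x => a * u x - f x (u x) - c * h x (u x)) u ∧
    (∀ x ∈ D, 0 < u x) ∧ (∀ x ∈ Dᶜ, u x = 0)


/-! ### Auxiliary lemmas -/

/-- second difference of the Gaussian profile -/
def sdv {d : ℕ} (v y : Rd d) : ℝ :=
  Real.exp (-‖v + y‖ ^ 2) + Real.exp (-‖v - y‖ ^ 2) - 2 * Real.exp (-‖v‖ ^ 2)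

lemma sdv_zero_right {d : ℕ} (v : Rd d) : sdv v 0 = 0 := by
  simp [sdv]; ring

lemma continuous_sdv {d : ℕ} (v : Rd d) : Continuous (fun y : Rd d => sdv v y) := by
  unfold sdv
  have c1 : Continuous fun y : Rd d => Real.exp (-‖v + y‖ ^ 2) :=
    Real.continuous_exp.comp (((continuous_const.add continuous_id).norm.pow 2).neg)
  have c2 : Continuous fun y : Rd d => Real.exp (-‖v - y‖ ^ 2) :=
    Real.continuous_exp.comp (((continuous_const.sub continuous_id).norm.pow 2).neg)
  exact (c1.add c2).sub continuous_const

lemma two_le_exp_add_exp_neg (B : ℝ) : 2 ≤ Real.exp B + Real.exp (-B) := by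
  have h : Real.exp B * Real.exp (-B) = 1 := by rw [← Real.exp_add]; simp
  nlinarith [sq_nonneg (Real.exp B - 1), Real.exp_pos B]

lemma cosh_mono_aux {B C : ℝ} (hB : 0 ≤ B) (h2 : B ≤ C) :
    Real.exp B + Real.exp (-B) ≤ Real.exp C + Real.exp (-C) := by
  have e1 : Real.exp (-B) - Real.exp (-C) = Real.exp (-B - C) * (Real.exp C - Real.exp B) := by
    rw [mul_sub, ← Real.exp_add, ← Real.exp_add]; ring_nf
  have e2 : Real.exp (-B - C) ≤ 1 := Real.exp_le_one_iff.mpr (by linarith)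
  have e3 : Real.exp B ≤ Real.exp C := Real.exp_le_exp.mpr h2
  nlinarith [Real.exp_pos B, Real.exp_pos C, Real.exp_pos (-B - C)]

lemma cosh_mono {B C : ℝ} (h : |B| ≤ C) :
    Real.exp B + Real.exp (-B) ≤ Real.exp C + Real.exp (-C) := by
  rcases le_total 0 B with hB | hB
  · have h' : B ≤ C := by rw [abs_of_nonneg hB] at h; exact h
    exact cosh_mono_aux hB h'
  · have h' : -B ≤ C := by rw [abs_of_nonpos hB] at h; exact h
    have h2 := cosh_mono_aux (neg_nonneg.mpr hB) h'
    rw [neg_neg] at h2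
    linarith

lemma hasDerivAt_phi (t : ℝ) :
    HasDerivAt (fun u : ℝ => Real.exp (-u ^ 2)) (Real.exp (-t ^ 2) * (-(2 * t))) t := by
  have h1 : HasDerivAt (fun u : ℝ => -u ^ 2) (-(2 * t)) t := by
    simpa using (hasDerivAt_pow 2 t).fun_neg
  simpa using h1.exp

lemma hasDerivAt_phid (t : ℝ) :
    HasDerivAt (fun u : ℝ => Real.exp (-u ^ 2) * (-(2 * u)))
      (Real.exp (-t ^ 2) * (4 * t ^ 2 - 2)) t := by
  have h2 : HasDerivAt (fun u : ℝ => -(2 * u)) (-2) t := by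
    simpa using ((hasDerivAt_id t).const_mul (2 : ℝ)).fun_neg
  have h1 := (hasDerivAt_phi t).fun_mul h2
  exact h1.congr_deriv (by ring)

lemma t2exp_le_one (t : ℝ) : t ^ 2 * Real.exp (-t ^ 2) ≤ 1 := by
  rw [Real.exp_neg, ← div_eq_mul_inv, div_le_one (Real.exp_pos _)]
  linarith [Real.add_one_le_exp (t ^ 2)]

lemma phid_lip (p q : ℝ) :
    |Real.exp (-p ^ 2) * (-(2 * p)) - Real.exp (-q ^ 2) * (-(2 * q))| ≤ 6 * |p - q| := by
  have hb : ∀ t ∈ (Set.univ : Set ℝ), ‖Real.exp (-t ^ 2) * (4 * t ^ 2 - 2)‖ ≤ 6 := by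
    intro t _
    rw [Real.norm_eq_abs, abs_mul, abs_of_pos (Real.exp_pos _)]
    have h1 := t2exp_le_one t
    have h2 : Real.exp (-t ^ 2) ≤ 1 := Real.exp_le_one_iff.mpr (by nlinarith [sq_nonneg t])
    have h3 : |4 * t ^ 2 - 2| ≤ 4 * t ^ 2 + 2 := by
      rw [abs_le]; constructor <;> nlinarith [sq_nonneg t]
    calc Real.exp (-t ^ 2) * |4 * t ^ 2 - 2| ≤ Real.exp (-t ^ 2) * (4 * t ^ 2 + 2) :=
          mul_le_mul_of_nonneg_left h3 (Real.exp_pos _).le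
      _ = 4 * (t ^ 2 * Real.exp (-t ^ 2)) + 2 * Real.exp (-t ^ 2) := by ring
      _ ≤ 6 := by nlinarith
  have key := Convex.norm_image_sub_le_of_norm_hasDerivWithin_le
    (fun t _ => (hasDerivAt_phid t).hasDerivWithinAt) hb convex_univ (Set.mem_univ q)
    (Set.mem_univ p)
  simpa [Real.norm_eq_abs] using key

lemma lemB (x h : ℝ) :
    |Real.exp (-(x + h) ^ 2) + Real.exp (-(x - h) ^ 2) - 2 * Real.exp (-x ^ 2)| ≤ 12 * h ^ 2 := by
  set F : ℝ → ℝ := fun t => Real.exp (-(x + t * h) ^ 2) + Real.exp (-(x - t * h) ^ 2) with hF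
  set F' : ℝ → ℝ := fun t =>
    Real.exp (-(x + t * h) ^ 2) * (-(2 * (x + t * h))) * h +
      Real.exp (-(x - t * h) ^ 2) * (-(2 * (x - t * h))) * (-h) with hF'
  have dF : ∀ t : ℝ, HasDerivAt F (F' t) t := by
    intro t
    have l1 : HasDerivAt (fun u : ℝ => x + u * h) h t := by
      simpa using (hasDerivAt_mul_const h).const_add x
    have l2 : HasDerivAt (fun u : ℝ => x - u * h) (-h) t := by
      have : (fun u : ℝ => x - u * h) = fun u : ℝ => x + -(u * h) := by funext u; ring
      rw [this]
      simpa using ((hasDerivAt_mul_const h).neg.const_add x)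
    exact ((hasDerivAt_phi (x + t * h)).comp t l1).add ((hasDerivAt_phi (x - t * h)).comp t l2)
  have hFb : ∀ t ∈ Icc (0 : ℝ) 1, ‖F' t‖ ≤ 12 * h ^ 2 := by
    intro t ht
    have heq : F' t = h * (Real.exp (-(x + t * h) ^ 2) * (-(2 * (x + t * h))) -
        Real.exp (-(x - t * h) ^ 2) * (-(2 * (x - t * h)))) := by rw [hF']; ring
    have hl := phid_lip (x + t * h) (x - t * h)
    have hsub : |(x + t * h) - (x - t * h)| = 2 * |t| * |h| := by
      rw [show (x + t * h) - (x - t * h) = 2 * (t * h) by ring, abs_mul, abs_mul]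
      norm_num; ring
    rw [Real.norm_eq_abs, heq, abs_mul]
    have ht1 : |t| ≤ 1 := by rw [abs_of_nonneg ht.1]; exact ht.2
    calc |h| * |Real.exp (-(x + t * h) ^ 2) * (-(2 * (x + t * h))) -
          Real.exp (-(x - t * h) ^ 2) * (-(2 * (x - t * h)))|
        ≤ |h| * (6 * (2 * |t| * |h|)) := by
          apply mul_le_mul_of_nonneg_left _ (abs_nonneg h)
          rw [← hsub]; exact hl
      _ = 12 * |t| * (|h| * |h|) := by ring
      _ ≤ 12 * h ^ 2 := by
          rw [← abs_mul, ← sq, abs_of_nonneg (sq_nonneg h)]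
          nlinarith [abs_nonneg t, sq_nonneg h]
  have key := Convex.norm_image_sub_le_of_norm_hasDerivWithin_le
    (fun t _ => (dF t).hasDerivWithinAt) hFb (convex_Icc 0 1)
    (Set.left_mem_Icc.mpr zero_le_one) (Set.right_mem_Icc.mpr zero_le_one)
  have hF1 : F 1 = Real.exp (-(x + h) ^ 2) + Real.exp (-(x - h) ^ 2) := by simp [hF]
  have hF0 : F 0 = 2 * Real.exp (-x ^ 2) := by simp [hF]; ring
  rw [hF1, hF0, Real.norm_eq_abs] at key
  calc |Real.exp (-(x + h) ^ 2) + Real.exp (-(x - h) ^ 2) - 2 * Real.exp (-x ^ 2)|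
      ≤ 12 * h ^ 2 * ‖(1 : ℝ) - 0‖ := key
    _ = 12 * h ^ 2 := by norm_num

lemma abs_sdv_le {d : ℕ} (v y : Rd d) : |sdv v y| ≤ 12 * min (‖y‖ ^ 2) 1 := by
  rcases le_or_gt (‖y‖ ^ 2) 1 with hr | hr
  · rw [min_eq_left hr]
    have hvy : ‖v + y‖ ^ 2 = ‖v‖ ^ 2 + 2 * inner ℝ v y + ‖y‖ ^ 2 := norm_add_sq_real v y
    have hvy' : ‖v - y‖ ^ 2 = ‖v‖ ^ 2 - 2 * inner ℝ v y + ‖y‖ ^ 2 := norm_sub_sq_real v y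
    set s := ‖v‖ with hs
    set r := ‖y‖ with hrdef
    set B : ℝ := 2 * (inner ℝ v y : ℝ) with hB
    have hBle : |B| ≤ 2 * (s * r) := by
      rw [hB, abs_mul, abs_two]
      have := abs_real_inner_le_norm v y
      nlinarith [abs_nonneg (inner ℝ v y : ℝ)]
    have e1 : Real.exp (-‖v + y‖ ^ 2) = Real.exp (-(s ^ 2 + r ^ 2)) * Real.exp (-B) := by
      rw [← Real.exp_add, hvy]; ring_nf
    have e2 : Real.exp (-‖v - y‖ ^ 2) = Real.exp (-(s ^ 2 + r ^ 2)) * Real.exp B := by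
      rw [← Real.exp_add, hvy']; ring_nf
    have hup : sdv v y ≤ 12 * r ^ 2 := by
      have hcosh := cosh_mono hBle
      have hsplit1 : Real.exp (-(s ^ 2 + r ^ 2)) * Real.exp (2 * (s * r)) =
          Real.exp (-(s - r) ^ 2) := by rw [← Real.exp_add]; ring_nf
      have hsplit2 : Real.exp (-(s ^ 2 + r ^ 2)) * Real.exp (-(2 * (s * r))) =
          Real.exp (-(s + r) ^ 2) := by rw [← Real.exp_add]; ring_nf
      have h2 := (abs_le.mp (lemB s r)).2
      have hepos := Real.exp_pos (-(s ^ 2 + r ^ 2))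
      have hc2 : Real.exp (-‖v + y‖ ^ 2) + Real.exp (-‖v - y‖ ^ 2)
          ≤ Real.exp (-(s + r) ^ 2) + Real.exp (-(s - r) ^ 2) := by
        rw [e1, e2, ← hsplit1, ← hsplit2]
        nlinarith [hcosh]
      unfold sdv
      nlinarith [h2]
    have hlo : -(2 * r ^ 2) ≤ sdv v y := by
      have h2 := two_le_exp_add_exp_neg B
      have hepos := Real.exp_pos (-(s ^ 2 + r ^ 2))
      have hsum : 2 * Real.exp (-(s ^ 2 + r ^ 2)) ≤
          Real.exp (-‖v + y‖ ^ 2) + Real.exp (-‖v - y‖ ^ 2) := by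
        rw [e1, e2]; nlinarith
      have hprod : Real.exp (-(s ^ 2 + r ^ 2)) = Real.exp (-s ^ 2) * Real.exp (-r ^ 2) := by
        rw [← Real.exp_add]; ring_nf
      have hr1 : 1 - r ^ 2 ≤ Real.exp (-r ^ 2) := by linarith [Real.add_one_le_exp (-r ^ 2)]
      have hs1 : Real.exp (-s ^ 2) ≤ 1 := Real.exp_le_one_iff.mpr (by nlinarith [sq_nonneg s])
      unfold sdv
      nlinarith [Real.exp_pos (-s ^ 2), sq_nonneg r]
    rw [abs_le]; constructor <;> nlinarith [sq_nonneg (‖y‖)]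
  · rw [min_eq_right hr.le]
    have b1 : Real.exp (-‖v + y‖ ^ 2) ≤ 1 :=
      Real.exp_le_one_iff.mpr (by nlinarith [sq_nonneg ‖v + y‖])
    have b2 : Real.exp (-‖v - y‖ ^ 2) ≤ 1 :=
      Real.exp_le_one_iff.mpr (by nlinarith [sq_nonneg ‖v - y‖])
    have b3 : Real.exp (-‖v‖ ^ 2) ≤ 1 := Real.exp_le_one_iff.mpr (by nlinarith [sq_nonneg ‖v‖])
    have p1 := Real.exp_pos (-‖v + y‖ ^ 2)
    have p2 := Real.exp_pos (-‖v - y‖ ^ 2)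
    have p3 := Real.exp_pos (-‖v‖ ^ 2)
    unfold sdv
    rw [abs_le]; constructor <;> nlinarith

lemma levyDensity_nonneg (d : ℕ) (m : Measure ℝ) (r : ℝ) : 0 ≤ levyDensity d m r := by
  apply setIntegral_nonneg measurableSet_Ioi
  intro t ht
  have h4 : (0 : ℝ) < 4 * π * t := by
    have hp := Real.pi_pos
    have : (0:ℝ) < t := ht
    positivity
  exact mul_nonneg (Real.rpow_nonneg h4.le _) (Real.exp_nonneg _)

lemma key_int {d : ℕ} {m : Measure ℝ}
    (hjInt : Integrable (fun y : Rd d => min (‖y‖ ^ 2) 1 * levyDensity d m ‖y‖))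
    (W : Rd d → ℝ) (hWm : Measurable W) (hW0 : W 0 = 0)
    (K₁ : ℝ) (hK₁ : 0 ≤ K₁)
    (hW : ∀ y, |W y| ≤ K₁ * min (‖y‖ ^ 2) 1) :
    Integrable (fun y : Rd d => W y * levyDensity d m ‖y‖) ∧
      |∫ y : Rd d, W y * levyDensity d m ‖y‖| ≤
        K₁ * ∫ y : Rd d, min (‖y‖ ^ 2) 1 * levyDensity d m ‖y‖ := by
  set J : ℝ → ℝ := levyDensity d m with hJdef
  have hJ : ∀ r, 0 ≤ J r := levyDensity_nonneg d m
  have hmin0 : ∀ y : Rd d, y ≠ 0 → 0 < min (‖y‖ ^ 2) 1 := by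
    intro y hy
    have : 0 < ‖y‖ := norm_pos_iff.mpr hy
    exact lt_min (by positivity) one_pos
  set Q : Rd d → ℝ := fun y => W y * (min (‖y‖ ^ 2) 1)⁻¹ with hQdef
  have hQm : Measurable Q :=
    hWm.mul ((((continuous_norm.pow 2).min continuous_const).measurable).inv)
  have hfun : ∀ y : Rd d, W y * J ‖y‖ = Q y * (min (‖y‖ ^ 2) 1 * J ‖y‖) := by
    intro y
    by_cases hy : y = 0
    · subst hy; simp [hQdef, hW0]
    · have hne := (hmin0 y hy).ne'
      rw [hQdef]
      field_simp
  have hQb : ∀ y, ‖Q y‖ ≤ K₁ := by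
    intro y
    by_cases hy : y = 0
    · subst hy; simp [hQdef, hW0]; exact hK₁
    · have hp := hmin0 y hy
      rw [Real.norm_eq_abs, hQdef, abs_mul, abs_inv, abs_of_pos hp]
      rw [mul_inv_le_iff₀ hp]
      calc |W y| ≤ K₁ * min (‖y‖ ^ 2) 1 := hW y
        _ = K₁ * min (‖y‖ ^ 2) 1 := rfl
  have hInt : Integrable (fun y : Rd d => W y * J ‖y‖) := by
    have heq : (fun y : Rd d => W y * J ‖y‖) = fun y => Q y * (min (‖y‖ ^ 2) 1 * J ‖y‖) :=
      funext hfun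
    rw [heq]
    exact hjInt.bdd_mul hQm.aestronglyMeasurable (Filter.Eventually.of_forall hQb)
  refine ⟨hInt, ?_⟩
  have h1 : |∫ y : Rd d, W y * J ‖y‖| ≤ ∫ y : Rd d, |W y * J ‖y‖| := by
    rw [← Real.norm_eq_abs]
    refine (norm_integral_le_integral_norm _).trans_eq ?_
    simp only [Real.norm_eq_abs]
  have h2 : (∫ y : Rd d, |W y * J ‖y‖|) ≤ ∫ y : Rd d, K₁ * (min (‖y‖ ^ 2) 1 * J ‖y‖) := by
    apply integral_mono hInt.abs (hjInt.const_mul K₁)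
    intro y
    show |W y * J ‖y‖| ≤ K₁ * (min (‖y‖ ^ 2) 1 * J ‖y‖)
    rw [abs_mul, abs_of_nonneg (hJ _)]
    have := hW y
    have := hJ ‖y‖
    nlinarith [abs_nonneg (W y)]
  have h3 : (∫ y : Rd d, K₁ * (min (‖y‖ ^ 2) 1 * J ‖y‖)) =
      K₁ * ∫ y : Rd d, min (‖y‖ ^ 2) 1 * J ‖y‖ := integral_const_mul K₁ _
  linarith

lemma contDiff_bump {d : ℕ} (p : Rd d) :
    ContDiff ℝ 2 (fun y : Rd d => 1 - Real.exp (-‖y - p‖ ^ 2)) := by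
  have h1 : ContDiff ℝ 2 (fun y : Rd d => y - p) := contDiff_id.sub contDiff_const
  have h2 : ContDiff ℝ 2 (fun y : Rd d => ‖y - p‖ ^ 2) := (contDiff_norm_sq ℝ).comp h1
  exact contDiff_const.sub h2.neg.exp

lemma bump_mem01 {d : ℕ} (p y : Rd d) :
    0 ≤ 1 - Real.exp (-‖y - p‖ ^ 2) ∧ 1 - Real.exp (-‖y - p‖ ^ 2) ≤ 1 := by
  constructor
  · have := Real.exp_le_one_iff.mpr (show -‖y - p‖ ^ 2 ≤ 0 by nlinarith [sq_nonneg ‖y - p‖])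
    linarith
  · linarith [Real.exp_pos (-‖y - p‖ ^ 2)]

lemma bump_pos {d : ℕ} (p y : Rd d) (hy : y ≠ p) : 0 < 1 - Real.exp (-‖y - p‖ ^ 2) := by
  have h0 : 0 < ‖y - p‖ := norm_pos_iff.mpr (sub_ne_zero.mpr hy)
  have : -‖y - p‖ ^ 2 < 0 := by nlinarith
  linarith [Real.exp_lt_one_iff.mpr this]

lemma contDiff_double_bump {d : ℕ} (x p : Rd d) (A ε b : ℝ) :
    ContDiff ℝ 2 (fun y : Rd d =>
      b + A * (1 - Real.exp (-‖y - p‖ ^ 2)) + ε * (1 - Real.exp (-‖y - x‖ ^ 2))) :=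
  (contDiff_const.add (contDiff_const.mul (contDiff_bump p))).add
    (contDiff_const.mul (contDiff_bump x))

lemma bdd_double_bump {d : ℕ} (x p : Rd d) (A ε b : ℝ) (hA : 0 ≤ A) (hε : 0 ≤ ε) :
    Bdd (fun y : Rd d =>
      b + A * (1 - Real.exp (-‖y - p‖ ^ 2)) + ε * (1 - Real.exp (-‖y - x‖ ^ 2))) := by
  refine ⟨|b| + A + ε, fun y => ?_⟩
  obtain ⟨h1, h2⟩ := bump_mem01 p y
  obtain ⟨h3, h4⟩ := bump_mem01 x y
  have goal : |b + A * (1 - Real.exp (-‖y - p‖ ^ 2)) + ε * (1 - Real.exp (-‖y - x‖ ^ 2))| ≤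
      |b| + A + ε := by
    rw [abs_le]; constructor <;> nlinarith [neg_abs_le b, le_abs_self b]
  exact goal

lemma bump_second_diff {d : ℕ} (x p : Rd d) (A ε b : ℝ) (y : Rd d) :
    (b + A * (1 - Real.exp (-‖(x + y) - p‖ ^ 2)) + ε * (1 - Real.exp (-‖(x + y) - x‖ ^ 2))) +
      (b + A * (1 - Real.exp (-‖(x - y) - p‖ ^ 2)) + ε * (1 - Real.exp (-‖(x - y) - x‖ ^ 2))) -
      2 * (b + A * (1 - Real.exp (-‖x - p‖ ^ 2)) + ε * (1 - Real.exp (-‖x - x‖ ^ 2))) =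
      -(A * sdv (x - p) y + ε * sdv 0 y) := by
  have e1 : (x + y) - p = (x - p) + y := by abel
  have e2 : (x - y) - p = (x - p) - y := by abel
  have e3 : (x + y) - x = (0 : Rd d) + y := by abel
  have e4 : (x - y) - x = (0 : Rd d) - y := by abel
  have e5 : x - x = (0 : Rd d) := sub_self x
  rw [e1, e2, e3, e4, e5]
  simp only [sdv]
  ring

lemma psiDel_double_bump {d : ℕ} {m : Measure ℝ}
    (hjInt : Integrable (fun y : Rd d => min (‖y‖ ^ 2) 1 * levyDensity d m ‖y‖))
    (x p : Rd d) (A ε b : ℝ) (hA : 0 ≤ A) (hε : 0 ≤ ε) :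
    |psiDel d (levyDensity d m)
        (fun y => b + A * (1 - Real.exp (-‖y - p‖ ^ 2)) + ε * (1 - Real.exp (-‖y - x‖ ^ 2))) x|
      ≤ 6 * (A + ε) * ∫ y : Rd d, min (‖y‖ ^ 2) 1 * levyDensity d m ‖y‖ := by
  set W : Rd d → ℝ := fun y => -(A * sdv (x - p) y + ε * sdv 0 y) with hWdef
  have hWm : Measurable W :=
    (((continuous_const.mul (continuous_sdv (x - p))).add
      (continuous_const.mul (continuous_sdv 0))).neg).measurable
  have hW0 : W 0 = 0 := by
    rw [hWdef]; simp [sdv_zero_right]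
  have hW : ∀ y, |W y| ≤ 12 * (A + ε) * min (‖y‖ ^ 2) 1 := by
    intro y
    rw [hWdef, abs_neg]
    calc |A * sdv (x - p) y + ε * sdv 0 y| ≤ A * |sdv (x - p) y| + ε * |sdv 0 y| := by
          refine (abs_add_le _ _).trans ?_
          rw [abs_mul, abs_mul, abs_of_nonneg hA, abs_of_nonneg hε]
      _ ≤ A * (12 * min (‖y‖ ^ 2) 1) + ε * (12 * min (‖y‖ ^ 2) 1) := by
          have h1 := abs_sdv_le (x - p) y
          have h2 := abs_sdv_le (0 : Rd d) y
          have := mul_le_mul_of_nonneg_left h1 hA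
          have := mul_le_mul_of_nonneg_left h2 hε
          linarith
      _ = 12 * (A + ε) * min (‖y‖ ^ 2) 1 := by ring
  obtain ⟨hInt, hbd⟩ := key_int hjInt W hWm hW0 (12 * (A + ε)) (by positivity) hW
  have hident : (fun y : Rd d =>
      ((fun z => b + A * (1 - Real.exp (-‖z - p‖ ^ 2)) + ε * (1 - Real.exp (-‖z - x‖ ^ 2)))
          (x + y) +
        (fun z => b + A * (1 - Real.exp (-‖z - p‖ ^ 2)) + ε * (1 - Real.exp (-‖z - x‖ ^ 2)))
          (x - y) -
        2 * (fun z => b + A * (1 - Real.exp (-‖z - p‖ ^ 2)) + ε * (1 - Real.exp (-‖z - x‖ ^ 2)))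
          x) *
        levyDensity d m ‖y‖) = fun y : Rd d => W y * levyDensity d m ‖y‖ := by
    funext y
    simp only
    rw [bump_second_diff x p A ε b y, hWdef]
  unfold psiDel
  rw [hident, abs_mul]
  have hhalf : |-(1 / 2 : ℝ)| = 1 / 2 := by norm_num
  rw [hhalf]
  linarith

set_option maxHeartbeats 1000000 in
/-- Lemma 3.2 (ii): for `a > λ₁` there is no nonzero nonnegative solution when `c` is large. -/
theorem harvesting_no_solution_large_c
    (d : ℕ) (hd : 1 ≤ d)
    (m : Measure ℝ)
    (hm : ∫⁻ t in Ioi (0 : ℝ), ENNReal.ofReal (1 - Real.exp (-t)) ∂m ≠ ⊤)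
    (D : Set (Rd d)) (hDo : IsOpen D) (hDb : Bornology.IsBounded D)
    (hDc : IsConnected D) (hDr : UniformBallCondition d D)
    (hjInt : Integrable (fun y : Rd d => min (‖y‖ ^ 2) 1 * levyDensity d m ‖y‖))
    (κ₁ κ₂ b₁ : ℝ) (hκ₁ : 0 < κ₁) (hκ₁₂ : κ₁ ≤ κ₂) (hκ₂ : κ₂ < 1) (hb₁ : 1 ≤ b₁)
    (hA1 : ∀ r R : ℝ, 1 ≤ r → r ≤ R →
      b₁⁻¹ * (R / r) ^ κ₁ ≤ bernsteinOf m R / bernsteinOf m r ∧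
        bernsteinOf m R / bernsteinOf m r ≤ b₁ * (R / r) ^ κ₂)
    (hA2 : ∃ b₂ > (1 : ℝ), ∀ r : ℝ, 1 ≤ r → levyDensity d m r ≤ b₂ * levyDensity d m (r + 1))
    (f f' : Rd d → ℝ → ℝ)
    (hfC : ContinuousOn (fun p : Rd d × ℝ => f p.1 p.2) (closure D ×ˢ Ici 0))
    (hfPos : ∀ x ∈ closure D, ∀ s : ℝ, 0 ≤ s → 0 ≤ f x s)
    (hfD : ∀ x ∈ closure D, ∀ s : ℝ, 0 ≤ s → HasDerivWithinAt (f x) (f' x s) (Ici 0) s)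
    (hf'C : ContinuousOn (fun p : Rd d × ℝ => f' p.1 p.2) (closure D ×ˢ Ici 0))
    (hf0 : ∀ x ∈ closure D, f x 0 = 0)
    (hf'0 : ∀ x ∈ closure D, f' x 0 = 0)
    (hfM : ∀ x ∈ D, StrictMonoOn (fun s => f x s / s) (Ioi 0))
    (hfL : Tendsto (fun s : ℝ => ⨅ x : D, f x.1 s / s) atTop atTop)
    (h h' : Rd d → ℝ → ℝ)
    (hhC : ContinuousOn (fun p : Rd d × ℝ => h p.1 p.2) (closure D ×ˢ Ici 0))
    (hhPos : ∀ x ∈ closure D, ∀ s : ℝ, 0 ≤ s → 0 ≤ h x s)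
    (hhD : ∀ x ∈ closure D, ∀ s : ℝ, 0 ≤ s → HasDerivWithinAt (h x) (h' x s) (Ici 0) s)
    (hh'C : ContinuousOn (fun p : Rd d × ℝ => h' p.1 p.2) (closure D ×ˢ Ici 0))
    (hhB : ∃ C, ∀ x ∈ closure D, ∀ s : ℝ, 0 ≤ s → h x s ≤ C)
    (hh0 : ∃ x ∈ closure D, 0 < h x 0)
    (hhInf : ∀ K > (0 : ℝ), (∀ x ∈ D, 0 ≤ sInf (h x '' Icc 0 K)) ∧
      ∃ x ∈ D, sInf (h x '' Icc 0 K) ≠ 0)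
    (a : ℝ) (ha : lambda1 d (levyDensity d m) D < a) :
    ∃ M > (0 : ℝ), ∀ c : ℝ, M < c →
      ¬ ∃ u : Rd d → ℝ, Bdd u ∧ Continuous u ∧ (∀ x, 0 ≤ u x) ∧ (∃ x, u x ≠ 0) ∧
        IsViscSol d (levyDensity d m) D
          (fun x => a * u x - f x (u x) - c * h x (u x)) u ∧
        (∀ x ∈ Dᶜ, u x = 0) := by
  classical
  -- superlinearity threshold
  obtain ⟨S₀, hS₀⟩ : ∃ S₀ : ℝ, ∀ s ≥ S₀, a + 1 ≤ ⨅ x : D, f x.1 s / s :=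
    eventually_atTop.mp (Filter.tendsto_atTop.mp hfL (a + 1))
  set K : ℝ := max S₀ 1 with hKdef
  have hK1 : (1 : ℝ) ≤ K := le_max_right _ _
  have hK0 : (0 : ℝ) < K := lt_of_lt_of_le one_pos hK1
  obtain ⟨hKnn, x₁, hx₁D, hx₁ne⟩ := hhInf K hK0
  set δ : ℝ := sInf (h x₁ '' Icc 0 K) with hδdef
  have hδ : 0 < δ := (hKnn x₁ hx₁D).lt_of_ne (Ne.symm hx₁ne)
  have hx₁cl : x₁ ∈ closure D := subset_closure hx₁D
  -- compactness and uniform continuity of h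
  have hDclos : IsCompact (closure D) :=
    Metric.isCompact_of_isClosed_isBounded isClosed_closure hDb.closure
  have hcompS : IsCompact ((closure D) ×ˢ Icc (0 : ℝ) K) := hDclos.prod isCompact_Icc
  have hhCS : ContinuousOn (fun p : Rd d × ℝ => h p.1 p.2) ((closure D) ×ˢ Icc (0 : ℝ) K) :=
    hhC.mono (prod_mono subset_rfl Icc_subset_Ici_self)
  obtain ⟨η, hη0, hη⟩ :=
    Metric.uniformContinuousOn_iff.mp (hcompS.uniformContinuousOn_of_continuous hhCS)
      (δ / 2) (by positivity)
  obtain ⟨η₂, hη₂0, hball⟩ := Metric.isOpen_iff.mp hDo x₁ hx₁D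
  set ρ : ℝ := min (min η η₂) 1 with hρdef
  have hρ0 : 0 < ρ := lt_min (lt_min hη0 hη₂0) one_pos
  have hρη : ρ ≤ η := (min_le_left _ _).trans (min_le_left _ _)
  have hballD : ball x₁ ρ ⊆ D :=
    (ball_subset_ball ((min_le_left _ _).trans (min_le_right _ _))).trans hball
  have hden : 0 < 1 - Real.exp (-ρ ^ 2) := by
    have : -ρ ^ 2 < 0 := by nlinarith
    linarith [Real.exp_lt_one_iff.mpr this]
  set C : ℝ := (K + 1) / (1 - Real.exp (-ρ ^ 2)) with hCdef
  have hC0 : 0 < C := div_pos (by linarith) hden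
  set I₀ : ℝ := ∫ y : Rd d, min (‖y‖ ^ 2) 1 * levyDensity d m ‖y‖ with hI₀def
  have hI₀ : 0 ≤ I₀ := by
    rw [hI₀def]
    apply integral_nonneg
    intro y
    exact mul_nonneg (le_min (sq_nonneg _) zero_le_one) (levyDensity_nonneg d m _)
  set B₀ : ℝ := |a| * K + 6 * (C + 1) * I₀ with hB₀def
  have hB₀0 : 0 ≤ B₀ := by
    rw [hB₀def]
    have h1 : 0 ≤ |a| * K := mul_nonneg (abs_nonneg a) hK0.le
    have h2 : 0 ≤ 6 * (C + 1) * I₀ := by positivity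
    linarith
  refine ⟨2 * (B₀ + 1) / δ + 1, by positivity, ?_⟩
  intro c hc
  rintro ⟨u, hub, huc, hun, ⟨xw, hxw⟩, ⟨hsub, hsup⟩, hu0⟩
  have hMge1 : (1 : ℝ) ≤ 2 * (B₀ + 1) / δ + 1 := by
    have : 0 ≤ 2 * (B₀ + 1) / δ := by positivity
    linarith
  have hc0 : 0 < c := lt_of_lt_of_le one_pos (hMge1.trans hc.le)
  -- global maximum point
  have hxwD : xw ∈ D := by
    by_contra hx
    exact hxw (hu0 xw hx)
  have hxwpos : 0 < u xw := (hun xw).lt_of_ne (Ne.symm hxw)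
  obtain ⟨x₀, hx₀cl, hx₀max⟩ :=
    hDclos.exists_isMaxOn ⟨xw, subset_closure hxwD⟩ huc.continuousOn
  have humax : ∀ y, u y ≤ u x₀ := by
    intro y
    by_cases hy : y ∈ closure D
    · exact hx₀max hy
    · have hy0 : u y = 0 := hu0 y (fun hyD => hy (subset_closure hyD))
      rw [hy0]
      exact le_trans hxwpos.le (hx₀max (subset_closure hxwD))
  have hu₀pos : 0 < u x₀ := lt_of_lt_of_le hxwpos (hx₀max (subset_closure hxwD))
  have hx₀D : x₀ ∈ D := by
    by_contra hx
    exact absurd (hu0 x₀ hx) (ne_of_gt hu₀pos)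
  -- key inequality at the maximum point
  have key0 : 0 ≤ a * u x₀ - f x₀ (u x₀) - c * h x₀ (u x₀) := by
    have main : ∀ ε : ℝ, 0 < ε → -(6 * (0 + ε) * I₀) ≤ a * u x₀ - f x₀ (u x₀) - c * h x₀ (u x₀) := by
      intro ε hε
      have hbdd := bdd_double_bump x₀ x₀ 0 ε (u x₀) le_rfl hε.le
      have hcd := contDiff_double_bump x₀ x₀ 0 ε (u x₀)
      have hxi : (fun y : Rd d => u x₀ + 0 * (1 - Real.exp (-‖y - x₀‖ ^ 2)) +
          ε * (1 - Real.exp (-‖y - x₀‖ ^ 2))) x₀ = u x₀ := by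
        simp [sub_self]
      have hgt : ∀ y, y ≠ x₀ → u y < (fun y : Rd d => u x₀ + 0 * (1 - Real.exp (-‖y - x₀‖ ^ 2)) +
          ε * (1 - Real.exp (-‖y - x₀‖ ^ 2))) y := by
        intro y hy
        have hb := bump_pos x₀ y hy
        have hm := humax y
        show u y < u x₀ + 0 * (1 - Real.exp (-‖y - x₀‖ ^ 2)) + ε * (1 - Real.exp (-‖y - x₀‖ ^ 2))
        nlinarith
      have hsubs := hsub x₀ hx₀D _ hbdd hcd.continuous ⟨1, one_pos, hcd.contDiffOn⟩ hxi hgt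
      beta_reduce at hsubs
      have habs := psiDel_double_bump hjInt x₀ x₀ 0 ε (u x₀) le_rfl hε.le
      rw [← hI₀def] at habs
      have hlow := (abs_le.mp habs).1
      linarith
    by_contra hR
    push_neg at hR
    rcases eq_or_lt_of_le hI₀ with hI0 | hIpos
    · have h1 := main 1 one_pos
      rw [← hI0] at h1
      simp at h1
      linarith
    · have hε : 0 < (-(a * u x₀ - f x₀ (u x₀) - c * h x₀ (u x₀))) / (12 * I₀) :=
        div_pos (by linarith) (by linarith)
      have hkey := main _ hε
      have heq : 6 * (0 + (-(a * u x₀ - f x₀ (u x₀) - c * h x₀ (u x₀))) / (12 * I₀)) * I₀ =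
          -(a * u x₀ - f x₀ (u x₀) - c * h x₀ (u x₀)) / 2 := by
        field_simp
        ring
      rw [heq] at hkey
      linarith
  -- uniform bound u ≤ K
  have hu₀K : u x₀ ≤ K := by
    by_contra hgt
    push_neg at hgt
    have hS : S₀ ≤ u x₀ := le_trans (le_max_left _ _) hgt.le
    have hinf := hS₀ (u x₀) hS
    have hbdd : BddBelow (range fun x : D => f x.1 (u x₀) / u x₀) := by
      refine ⟨0, ?_⟩
      rintro z ⟨x, rfl⟩
      exact div_nonneg (hfPos x.1 (subset_closure x.2) _ hu₀pos.le) hu₀pos.le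
    have hle : (⨅ x : D, f x.1 (u x₀) / u x₀) ≤ f x₀ (u x₀) / u x₀ :=
      ciInf_le hbdd (⟨x₀, hx₀D⟩ : D)
    have hch : 0 ≤ c * h x₀ (u x₀) :=
      mul_nonneg hc0.le (hhPos x₀ (subset_closure hx₀D) _ (hun x₀))
    have hfa : f x₀ (u x₀) ≤ a * u x₀ := by linarith
    have hdiv : f x₀ (u x₀) / u x₀ ≤ a := (div_le_iff₀ hu₀pos).mpr (by linarith)
    linarith
  have huK : ∀ y, u y ≤ K := fun y => (humax y).trans hu₀K
  -- construct the touching point near x₁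
  set w : Rd d → ℝ := fun y => u y - C * (1 - Real.exp (-‖y - x₁‖ ^ 2)) with hwdef
  have hwcont : Continuous w := huc.sub (continuous_const.mul (contDiff_bump x₁).continuous)
  obtain ⟨xb, hxbcb, hxbmax⟩ :=
    (isCompact_closedBall x₁ ρ).exists_isMaxOn ⟨x₁, mem_closedBall_self hρ0.le⟩
      hwcont.continuousOn
  have hwx₁ : w x₁ = u x₁ := by
    rw [hwdef]
    simp [sub_self]
  have hwx₁0 : 0 ≤ w x₁ := by rw [hwx₁]; exact hun x₁
  have hwout : ∀ y : Rd d, ρ ≤ dist y x₁ → w y ≤ -1 := by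
    intro y hy
    have hnorm : ρ ≤ ‖y - x₁‖ := by rwa [← dist_eq_norm]
    have h1 : Real.exp (-‖y - x₁‖ ^ 2) ≤ Real.exp (-ρ ^ 2) := by
      apply Real.exp_le_exp.mpr
      have hsq := pow_le_pow_left₀ hρ0.le hnorm 2
      linarith
    have hCg : C * (1 - Real.exp (-ρ ^ 2)) = K + 1 := div_mul_cancel₀ _ (ne_of_gt hden)
    have h2 : K + 1 ≤ C * (1 - Real.exp (-‖y - x₁‖ ^ 2)) := by
      rw [← hCg]
      apply mul_le_mul_of_nonneg_left (by linarith) hC0.le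
    have h3 : u y ≤ K := huK y
    rw [hwdef]
    simp only
    linarith
  have hwglob : ∀ y, w y ≤ w xb := by
    intro y
    by_cases hy : y ∈ closedBall x₁ ρ
    · exact hxbmax hy
    · have hlt : ρ < dist y x₁ := by
        by_contra hge
        push_neg at hge
        exact hy (mem_closedBall.mpr hge)
      have h1 := hwout y hlt.le
      have h2 : w x₁ ≤ w xb := hxbmax (mem_closedBall_self hρ0.le)
      linarith
  have hxbball : xb ∈ ball x₁ ρ := by
    rw [mem_ball]
    by_contra hge
    push_neg at hge
    have h1 := hwout xb hge
    have h2 : w x₁ ≤ w xb := hxbmax (mem_closedBall_self hρ0.le)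
    linarith
  have hxbD : xb ∈ D := hballD hxbball
  -- test function at xb
  have hbdd2 := bdd_double_bump xb x₁ C 1 (w xb) hC0.le zero_le_one
  have hcd2 := contDiff_double_bump xb x₁ C 1 (w xb)
  have hxi2 : (fun y : Rd d => w xb + C * (1 - Real.exp (-‖y - x₁‖ ^ 2)) +
      1 * (1 - Real.exp (-‖y - xb‖ ^ 2))) xb = u xb := by
    show w xb + C * (1 - Real.exp (-‖xb - x₁‖ ^ 2)) + 1 * (1 - Real.exp (-‖xb - xb‖ ^ 2)) = u xb
    rw [hwdef]
    simp [sub_self]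
  have hgt2 : ∀ y, y ≠ xb → u y < (fun y : Rd d => w xb + C * (1 - Real.exp (-‖y - x₁‖ ^ 2)) +
      1 * (1 - Real.exp (-‖y - xb‖ ^ 2))) y := by
    intro y hy
    have hb := bump_pos xb y hy
    have hm := hwglob y
    have hu : u y = w y + C * (1 - Real.exp (-‖y - x₁‖ ^ 2)) := by
      rw [hwdef]; ring
    show u y < w xb + C * (1 - Real.exp (-‖y - x₁‖ ^ 2)) + 1 * (1 - Real.exp (-‖y - xb‖ ^ 2))
    rw [hu]
    nlinarith
  have hsubs2 := hsub xb hxbD _ hbdd2 hcd2.continuous ⟨1, one_pos, hcd2.contDiffOn⟩ hxi2 hgt2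
  beta_reduce at hsubs2
  have habs2 := psiDel_double_bump hjInt xb x₁ C 1 (w xb) hC0.le zero_le_one
  rw [← hI₀def] at habs2
  have hlow2 := (abs_le.mp habs2).1
  -- lower bound on h near x₁
  have huxbK : u xb ∈ Icc (0 : ℝ) K := ⟨hun xb, huK xb⟩
  have hp1 : ((xb, u xb) : Rd d × ℝ) ∈ (closure D) ×ˢ Icc (0 : ℝ) K :=
    ⟨subset_closure hxbD, huxbK⟩
  have hp2 : ((x₁, u xb) : Rd d × ℝ) ∈ (closure D) ×ˢ Icc (0 : ℝ) K := ⟨hx₁cl, huxbK⟩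
  have hdist : dist ((xb, u xb) : Rd d × ℝ) ((x₁, u xb) : Rd d × ℝ) < η := by
    rw [Prod.dist_eq]
    simp only [dist_self]
    have h1 : dist xb x₁ < ρ := mem_ball.mp hxbball
    have h2 : dist xb x₁ ⊔ 0 = dist xb x₁ := max_eq_left dist_nonneg
    rw [h2]
    exact lt_of_lt_of_le h1 hρη
  have hclose := hη _ hp1 _ hp2 hdist
  have hδle : δ ≤ h x₁ (u xb) := by
    rw [hδdef]
    apply csInf_le
    · refine ⟨0, ?_⟩
      rintro z ⟨s, hs, rfl⟩
      exact hhPos x₁ hx₁cl s hs.1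
    · exact ⟨u xb, huxbK, rfl⟩
  have hhxb : δ / 2 ≤ h xb (u xb) := by
    rw [Real.dist_eq] at hclose
    have := abs_lt.mp hclose
    linarith [this.1, this.2]
  -- final contradiction
  have hfxb : 0 ≤ f xb (u xb) := hfPos xb (subset_closure hxbD) _ (hun xb)
  have haxb : a * u xb ≤ |a| * K := by
    have h1 : a ≤ |a| := le_abs_self a
    have h2 : 0 ≤ u xb := hun xb
    have h3 : u xb ≤ K := huK xb
    nlinarith [abs_nonneg a]
  have hch2 : c * (δ / 2) ≤ c * h xb (u xb) := mul_le_mul_of_nonneg_left hhxb hc0.le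
  have hfinal : c * (δ / 2) ≤ B₀ := by
    rw [hB₀def]
    linarith
  have hc1 : 2 * (B₀ + 1) / δ < c - 1 + 1 := by linarith
  have hc2 : 2 * (B₀ + 1) < c * δ := by
    rw [div_lt_iff₀ hδ] at hc1
    nlinarith
  nlinarith
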